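/- arXiv:2009.13241 — 2 statements merged into one kernel-verified Lean document; each statement's English description precedes it below -/
import Mathlib

section
/- Let (P,σ) be an asymptotically periodic Markov operator cocycle on a metric space (Ω, d_Ω) with σ preserving a regular probability measure ℙ, and suppose each density component g_i ∈ C(Ω, L^∞(X,m)) is continuous in ω. If (P,σ) is prior mixing for homogeneous observables, then the period r equals 1, i.e., (P,σ) is asymptotically stable. -/
open MeasureTheory Filter Topology

/-- The cocycle `P_ω^{(n)} = P_{σ^{n-1}ω} ∘ ⋯ ∘ P_ω` generated by a family of
operators over the driving system `σ`. -/
noncomputable def coc {Ω M : Type*} [Monoid M] (P : Ω → M) (σ : Ω → Ω) : ℕ → Ω → M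
  | 0, _ => 1
  | n + 1, ω => P (σ^[n] ω) * coc P σ n ω

section Aux

variable {X : Type*} [MeasurableSpace X] {m : Measure X} [IsProbabilityMeasure m]

/-- Testing an `L¹` function against an a.e.-bounded-by-one function: the integral of
the product is bounded by the `L¹` norm. -/
lemma aux_abs_integral_mul_le (v : Lp ℝ 1 m) (u : Lp ℝ ⊤ m)
    (hu1 : ∀ᵐ x ∂m, |u x| ≤ 1) :
    |∫ x, v x * u x ∂m| ≤ ‖v‖ := by
  have hvint : Integrable (⇑v) m := L1.integrable_coeFn v
  have hprod : Integrable (fun x => v x * u x) m := by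
    refine Integrable.mono' hvint.norm
      ((Lp.aestronglyMeasurable v).mul (Lp.aestronglyMeasurable u)) ?_
    filter_upwards [hu1] with x hx
    calc ‖v x * u x‖ = |v x| * |u x| := abs_mul _ _
      _ ≤ |v x| * 1 := by
          exact mul_le_mul_of_nonneg_left hx (abs_nonneg _)
      _ = ‖v x‖ := by simp
  calc |∫ x, v x * u x ∂m| ≤ ∫ x, ‖v x * u x‖ ∂m :=
        norm_integral_le_integral_norm (fun x => v x * u x)
    _ ≤ ∫ x, ‖v x‖ ∂m := by
        refine integral_mono_ae hprod.norm hvint.norm ?_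
        filter_upwards [hu1] with x hx
        calc ‖v x * u x‖ = |v x| * |u x| := abs_mul _ _
          _ ≤ |v x| * 1 := mul_le_mul_of_nonneg_left hx (abs_nonneg _)
          _ = ‖v x‖ := by simp
    _ = ‖v‖ := (L1.norm_eq_integral_norm v).symm

/-- Integrability of the product of an `L¹` function and an a.e.-bounded function. -/
lemma aux_integrable_mul (v : Lp ℝ 1 m) (u : Lp ℝ ⊤ m)
    (hu1 : ∀ᵐ x ∂m, |u x| ≤ 1) :
    Integrable (fun x => v x * u x) m := by
  refine Integrable.mono' (L1.integrable_coeFn v).norm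
    ((Lp.aestronglyMeasurable v).mul (Lp.aestronglyMeasurable u)) ?_
  filter_upwards [hu1] with x hx
  calc ‖v x * u x‖ = |v x| * |u x| := abs_mul _ _
    _ ≤ |v x| * 1 := mul_le_mul_of_nonneg_left hx (abs_nonneg _)
    _ = ‖v x‖ := by simp

end Aux

/-- Let `(P,σ)` be an asymptotically periodic Markov operator cocycle on a metric
space `Ω` with `σ` preserving a regular probability measure, such that each
density component `g_i` depends continuously on `ω`. If `(P,σ)` is prior mixing
for homogeneous observables, then the period `r` equals `1`. -/
theorem prior_mixing_implies_period_one
    {X : Type*} [MeasurableSpace X] (m : Measure X) [IsProbabilityMeasure m]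
    {Ω : Type*} [MetricSpace Ω] [MeasurableSpace Ω] [BorelSpace Ω]
    (Pr : Measure Ω) [IsProbabilityMeasure Pr] (hreg : Pr.Regular)
    (σ : Ω → Ω) (hσ : MeasurePreserving σ Pr Pr)
    (P : Ω → Module.End ℝ (Lp ℝ 1 m))
    (hP : ∀ᵐ ω ∂Pr, (∀ f : Lp ℝ 1 m, 0 ≤ f → 0 ≤ P ω f) ∧
      ∀ f : Lp ℝ 1 m, ∫ x, (P ω f) x ∂m = ∫ x, f x ∂m)
    -- asymptotic periodicity data with continuous density components:
    (r : ℕ) (hr : 0 < r)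
    (g : Fin r → Ω → Lp ℝ 1 m) (lam : Fin r → Ω → (Lp ℝ 1 m →L[ℝ] ℝ))
    (ρ : Ω → Equiv.Perm (Fin r))
    (hgcont : ∀ i, Continuous (g i))
    (hdens : ∀ᵐ ω ∂Pr, ∀ i, 0 ≤ g i ω ∧ ∫ x, (g i ω) x ∂m = 1)
    (hdisj : ∀ᵐ ω ∂Pr, ∀ i j, i ≠ j → g i ω ⊓ g j ω = 0)
    (hperm : ∀ᵐ ω ∂Pr, ∀ i, P ω (g i ω) = g (ρ ω i) (σ ω))
    (hconv : ∀ᵐ ω ∂Pr, ∀ f : Lp ℝ 1 m,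
      Tendsto (fun n => ‖coc P σ n ω (f - ∑ i, lam i ω f • g i ω)‖)
        atTop (𝓝 0))
    -- prior mixing for homogeneous observables:
    (hmix : ∀ᵐ ω ∂Pr, ∀ (f : Lp ℝ 1 m), ∫ x, f x ∂m = 0 → ∀ (u : Lp ℝ ⊤ m),
      Tendsto (fun n => ∫ x, (coc P σ n ω f) x * u x ∂m) atTop (𝓝 0)) :
    r = 1 := by
  by_contra hr1
  have h2 : 1 < r := lt_of_le_of_ne hr (Ne.symm hr1)
  set i0 : Fin r := ⟨0, hr⟩ with hi0
  set i1 : Fin r := ⟨1, h2⟩ with hi1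
  have hne01 : i0 ≠ i1 := by
    intro h
    have := congrArg Fin.val h
    simp [hi0, hi1] at this
  haveI := hreg
  -- a.e. permutation property along the whole orbit
  have hperm_orbit : ∀ᵐ ω ∂Pr, ∀ n : ℕ, ∀ i,
      P (σ^[n] ω) (g i (σ^[n] ω)) = g (ρ (σ^[n] ω) i) (σ (σ^[n] ω)) := by
    rw [ae_all_iff]
    intro n
    exact (hσ.iterate n).quasiMeasurePreserving.ae hperm
  -- combined a.e. property
  have hΦ : ∀ᵐ ω ∂Pr,
      ((∀ i, 0 ≤ g i ω ∧ ∫ x, (g i ω) x ∂m = 1) ∧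
        (∀ i j, i ≠ j → g i ω ⊓ g j ω = 0)) ∧
      ((∀ n : ℕ, ∀ i, P (σ^[n] ω) (g i (σ^[n] ω)) = g (ρ (σ^[n] ω) i) (σ (σ^[n] ω))) ∧
        (∀ f : Lp ℝ 1 m, ∫ x, f x ∂m = 0 → ∀ u : Lp ℝ ⊤ m,
          Tendsto (fun n => ∫ x, (coc P σ n ω f) x * u x ∂m) atTop (𝓝 0))) :=
    (hdens.and hdisj).and (hperm_orbit.and hmix)
  -- a measurable set of full measure inside the a.e. set
  obtain ⟨t, hsub, htm, htnull⟩ :=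
    exists_measurable_superset_of_null (ae_iff.mp hΦ)
  set G : Set Ω := tᶜ with hGdef
  have hGmeas : MeasurableSet G := htm.compl
  have hGfull : Pr G = 1 := by
    rw [hGdef, measure_compl htm (measure_ne_top Pr t), htnull, measure_univ]
    simp
  have hGP : ∀ ω ∈ G, ((∀ i, 0 ≤ g i ω ∧ ∫ x, (g i ω) x ∂m = 1) ∧
      (∀ i j, i ≠ j → g i ω ⊓ g j ω = 0)) ∧
      ((∀ n : ℕ, ∀ i, P (σ^[n] ω) (g i (σ^[n] ω)) = g (ρ (σ^[n] ω) i) (σ (σ^[n] ω))) ∧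
        (∀ f : Lp ℝ 1 m, ∫ x, f x ∂m = 0 → ∀ u : Lp ℝ ⊤ m,
          Tendsto (fun n => ∫ x, (coc P σ n ω f) x * u x ∂m) atTop (𝓝 0))) := by
    intro ω hω
    by_contra hcon
    exact hω (hsub hcon)
  -- a compact subset of positive measure
  obtain ⟨K, hKG, hKcomp, hKpos⟩ :=
    hGmeas.exists_lt_isCompact_of_ne_top (measure_ne_top Pr G)
      (show (0 : ENNReal) < Pr G by rw [hGfull]; norm_num)
  -- finite covers of K at scale 1/(2(k+1))
  set dk : ℕ → ℝ := fun k => 1 / (2 * (k + 1)) with hdk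
  have hdkpos : ∀ k : ℕ, 0 < dk k := by
    intro k
    apply div_pos one_pos
    positivity
  have hcover : ∀ k : ℕ, ∃ s : Set Ω, s ⊆ K ∧ s.Finite ∧
      K ⊆ ⋃ x ∈ s, Metric.ball x (dk k) := by
    intro k
    exact hKcomp.elim_finite_subcover_image (fun x _ => Metric.isOpen_ball)
      (fun x hx => Set.mem_biUnion hx (Metric.mem_ball_self (hdkpos k)))
  choose C hCK hCfin hCcov using hcover
  -- Poincaré recurrence
  have hcons : Conservative σ Pr := hσ.conservative
  have hrec : ∀ᵐ ω ∂Pr, ∀ k : ℕ, ∀ x ∈ C k, ω ∈ Metric.ball x (dk k) →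
      ∃ᶠ n in atTop, σ^[n] ω ∈ Metric.ball x (dk k) := by
    rw [ae_all_iff]
    intro k
    rw [ae_ball_iff (hCfin k).countable]
    intro x _
    exact hcons.ae_mem_imp_frequently_image_mem
      Metric.isOpen_ball.measurableSet.nullMeasurableSet
  -- choose a good point ω ∈ K
  have hex : ∃ ω, ω ∈ K ∧ (∀ k : ℕ, ∀ x ∈ C k, ω ∈ Metric.ball x (dk k) →
      ∃ᶠ n in atTop, σ^[n] ω ∈ Metric.ball x (dk k)) := by
    by_contra hcon
    push_neg at hcon
    have hKsub : K ⊆ {ω | ¬ ∀ k : ℕ, ∀ x ∈ C k, ω ∈ Metric.ball x (dk k) →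
        ∃ᶠ n in atTop, σ^[n] ω ∈ Metric.ball x (dk k)} := by
      intro ω hω
      obtain ⟨k, x, hx, hball, hnot⟩ := hcon ω hω
      intro hall
      exact (not_frequently.mpr hnot) (hall k x hx hball)
    exact absurd (measure_mono_null hKsub (ae_iff.mp hrec)) hKpos.ne'
  obtain ⟨ω, hωK, hωrec⟩ := hex
  obtain ⟨⟨hωdens, hωdisj⟩, hωperm, hωmix⟩ := hGP ω (hKG hωK)
  -- continuity: a uniform scale δ₀
  have hGc : Continuous (fun ω : Ω => fun i : Fin r => g i ω) :=
    continuous_pi fun i => hgcont i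
  obtain ⟨δ₀, hδ₀pos, hδ₀⟩ :=
    Metric.continuousAt_iff.mp hGc.continuousAt (1 / 4) (by norm_num)
  have hclose : ∀ ω' : Ω, dist ω' ω < δ₀ → ∀ i : Fin r, ‖g i ω' - g i ω‖ < 1 / 4 := by
    intro ω' hω' i
    have h1 : dist (fun i : Fin r => g i ω') (fun i : Fin r => g i ω) < 1 / 4 := hδ₀ hω'
    have h2 : dist (g i ω') (g i ω) ≤
        dist (fun i : Fin r => g i ω') (fun i : Fin r => g i ω) :=
      dist_le_pi_dist (fun i : Fin r => g i ω') (fun i : Fin r => g i ω) i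
    rw [← dist_eq_norm]
    exact lt_of_le_of_lt h2 h1
  -- cocycle formula along the orbit
  set f0 : Lp ℝ 1 m := g i0 ω - g i1 ω with hf0
  have hcoc : ∀ n : ℕ, ∃ a b : Fin r, a ≠ b ∧
      coc P σ n ω f0 = g a (σ^[n] ω) - g b (σ^[n] ω) := by
    intro n
    induction n with
    | zero =>
      refine ⟨i0, i1, hne01, ?_⟩
      simp [coc, hf0]
    | succ n ih =>
      obtain ⟨a, b, hab, hcoceq⟩ := ih
      refine ⟨ρ (σ^[n] ω) a, ρ (σ^[n] ω) b,
        fun h => hab ((ρ (σ^[n] ω)).injective h), ?_⟩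
      have hdefs : coc P σ (n + 1) ω = P (σ^[n] ω) * coc P σ n ω := rfl
      rw [hdefs, Module.End.mul_apply, hcoceq, map_sub, hωperm n a, hωperm n b,
        Function.iterate_succ_apply']
  choose a b hab hcoceq using hcoc
  -- find a recurrence scale below δ₀
  obtain ⟨k, hk⟩ := exists_nat_one_div_lt hδ₀pos
  obtain ⟨x, hxC, hxball⟩ := Set.mem_iUnion₂.mp (hCcov k hωK)
  have hfreq : ∃ᶠ n in atTop, σ^[n] ω ∈ Metric.ball x (dk k) := hωrec k x hxC hxball
  have hfreq' : ∃ᶠ n in atTop, dist (σ^[n] ω) ω < δ₀ := by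
    refine hfreq.mono fun n hn => ?_
    have h1 : dist (σ^[n] ω) x < dk k := Metric.mem_ball.mp hn
    have h2 : dist ω x < dk k := Metric.mem_ball.mp hxball
    have h3 : dist (σ^[n] ω) ω ≤ dist (σ^[n] ω) x + dist x ω := dist_triangle _ _ _
    have h4 : dist x ω = dist ω x := dist_comm _ _
    have h5 : dk k + dk k = 1 / (k + 1) := by
      rw [hdk]
      have hk1 : (k : ℝ) + 1 ≠ 0 := by positivity
      field_simp
      norm_num
    calc dist (σ^[n] ω) ω ≤ dist (σ^[n] ω) x + dist x ω := h3
      _ < dk k + dk k := by rw [h4]; linarith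
      _ = 1 / (k + 1) := h5
      _ < δ₀ := hk
  -- pigeonhole: a fixed pair occurs frequently
  have hpigeon : ∃ c0 : Fin r × Fin r,
      ∃ᶠ n in atTop, dist (σ^[n] ω) ω < δ₀ ∧ (a n, b n) = c0 := by
    by_contra hcon
    push_neg at hcon
    have h1 : ∀ᶠ n in atTop, ∀ c0 : Fin r × Fin r,
        ¬(dist (σ^[n] ω) ω < δ₀ ∧ (a n, b n) = c0) :=
      eventually_all.mpr fun c0 => (hcon c0).mono fun n hn h => hn h.1 h.2
    obtain ⟨n, hd, hall⟩ := (hfreq'.and_eventually h1).exists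
    exact hall (a n, b n) ⟨hd, rfl⟩
  obtain ⟨⟨A, B⟩, hfreqAB⟩ := hpigeon
  have hABne : A ≠ B := by
    obtain ⟨n, _, hn⟩ := hfreqAB.exists
    have h1 : a n = A := by
      have := congrArg Prod.fst hn; simpa using this
    have h2 : b n = B := by
      have := congrArg Prod.snd hn; simpa using this
    rw [← h1, ← h2]
    exact hab n
  -- the test function u
  set ga : Lp ℝ 1 m := g A ω with hga
  set gb : Lp ℝ 1 m := g B ω with hgb
  have hga0 : ∀ᵐ x ∂m, 0 ≤ ga x := by
    have := (Lp.coeFn_nonneg ga).mpr (hωdens A).1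
    filter_upwards [this] with x hx
    simpa using hx
  have hgb0 : ∀ᵐ x ∂m, 0 ≤ gb x := by
    have := (Lp.coeFn_nonneg gb).mpr (hωdens B).1
    filter_upwards [this] with x hx
    simpa using hx
  have hmin : ∀ᵐ x ∂m, min (ga x) (gb x) = 0 := by
    have hinf : ga ⊓ gb = 0 := hωdisj A B hABne
    have h1 := Lp.coeFn_inf ga gb
    have h2 := Lp.coeFn_zero ℝ 1 m
    rw [hinf] at h1
    filter_upwards [h1, h2] with x hx1 hx2
    rw [← Pi.inf_apply, ← hx1, hx2]
    simp
  set S : Set X := {x | ga x ≠ 0} with hS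
  have hSm : MeasurableSet S := by
    have : S = ⇑ga ⁻¹' ({(0 : ℝ)}ᶜ) := rfl
    rw [this]
    exact (Lp.stronglyMeasurable ga).measurable (measurableSet_singleton (0:ℝ)).compl
  set u : Lp ℝ ⊤ m := indicatorConstLp ⊤ hSm (measure_ne_top m S) (1 : ℝ) with hudef
  have hu : ⇑u =ᵐ[m] S.indicator fun _ => (1 : ℝ) := indicatorConstLp_coeFn
  have hu1 : ∀ᵐ x ∂m, |u x| ≤ 1 := by
    filter_upwards [hu] with x hx
    rw [hx]
    by_cases hxS : x ∈ S
    · rw [Set.indicator_of_mem hxS]; norm_num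
    · rw [Set.indicator_of_notMem hxS]; norm_num
  -- the two key integrals
  have hIa : ∫ x, ga x * u x ∂m = 1 := by
    have heq : (fun x => ga x * u x) =ᵐ[m] ⇑ga := by
      filter_upwards [hu] with x hx
      rw [hx]
      by_cases hxS : x ∈ S
      · rw [Set.indicator_of_mem hxS, mul_one]
      · rw [Set.indicator_of_notMem hxS, mul_zero]
        have : ga x = 0 := by simpa [hS] using hxS
        rw [this]
    rw [integral_congr_ae heq]
    exact (hωdens A).2
  have hIb : ∫ x, gb x * u x ∂m = 0 := by
    have heq : (fun x => gb x * u x) =ᵐ[m] fun _ => (0 : ℝ) := by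
      filter_upwards [hu, hmin, hga0, hgb0] with x hx hminx hgax hgbx
      rw [hx]
      by_cases hxS : x ∈ S
      · rw [Set.indicator_of_mem hxS, mul_one]
        have hganz : ga x ≠ 0 := hxS
        rcases min_eq_iff.mp hminx with ⟨h, _⟩ | ⟨h, _⟩
        · exact absurd h hganz
        · exact h
      · rw [Set.indicator_of_notMem hxS, mul_zero]
    rw [integral_congr_ae heq, integral_zero]
  -- the integral of f0 is zero
  have hf0int : ∫ x, f0 x ∂m = 0 := by
    have h1 := Lp.coeFn_sub (g i0 ω) (g i1 ω)
    rw [← hf0] at h1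
    rw [integral_congr_ae h1]
    simp only [Pi.sub_apply]
    rw [integral_sub (L1.integrable_coeFn (g i0 ω)) (L1.integrable_coeFn (g i1 ω))]
    rw [(hωdens i0).2, (hωdens i1).2, sub_self]
  -- prior mixing gives the convergence of the test integrals
  have hmixtend := hωmix f0 hf0int u
  have hev : ∀ᶠ n in atTop, (∫ x, (coc P σ n ω f0) x * u x ∂m) < 1 / 2 :=
    hmixtend.eventually_lt_const (by norm_num)
  -- a generic lemma: shifting the integral by an L¹-perturbation
  have hshift : ∀ (v w : Lp ℝ 1 m),
      |(∫ x, v x * u x ∂m) - ∫ x, w x * u x ∂m| ≤ ‖v - w‖ := by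
    intro v w
    have h1 : (fun x => (v - w : Lp ℝ 1 m) x * u x) =ᵐ[m]
        fun x => v x * u x - w x * u x := by
      filter_upwards [Lp.coeFn_sub v w] with x hx
      rw [hx]
      simp [sub_mul]
    have h2 : ∫ x, (v - w : Lp ℝ 1 m) x * u x ∂m
        = (∫ x, v x * u x ∂m) - ∫ x, w x * u x ∂m := by
      rw [integral_congr_ae h1]
      exact integral_sub (aux_integrable_mul v u hu1) (aux_integrable_mul w u hu1)
    rw [← h2]
    exact aux_abs_integral_mul_le (v - w) u hu1
  -- the frequent lower bound
  have hlow : ∃ᶠ n in atTop, (1:ℝ) / 2 ≤ ∫ x, (coc P σ n ω f0) x * u x ∂m := by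
    refine hfreqAB.mono fun n hn => ?_
    obtain ⟨hdist, hpair⟩ := hn
    have hA : a n = A := by have := congrArg Prod.fst hpair; simpa using this
    have hB : b n = B := by have := congrArg Prod.snd hpair; simpa using this
    have hceq : coc P σ n ω f0 = g A (σ^[n] ω) - g B (σ^[n] ω) := by
      rw [← hA, ← hB]; exact hcoceq n
    have hsplit : ∫ x, (coc P σ n ω f0) x * u x ∂m
        = (∫ x, (g A (σ^[n] ω)) x * u x ∂m) - ∫ x, (g B (σ^[n] ω)) x * u x ∂m := by
      rw [hceq]
      have h1 : (fun x => (g A (σ^[n] ω) - g B (σ^[n] ω) : Lp ℝ 1 m) x * u x) =ᵐ[m]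
          fun x => (g A (σ^[n] ω)) x * u x - (g B (σ^[n] ω)) x * u x := by
        filter_upwards [Lp.coeFn_sub (g A (σ^[n] ω)) (g B (σ^[n] ω))] with x hx
        rw [hx]
        simp [sub_mul]
      rw [integral_congr_ae h1]
      exact integral_sub (aux_integrable_mul _ u hu1) (aux_integrable_mul _ u hu1)
    have hAnear : |(∫ x, (g A (σ^[n] ω)) x * u x ∂m) - 1| < 1 / 4 := by
      have h1 := hshift (g A (σ^[n] ω)) ga
      rw [hIa] at h1
      exact lt_of_le_of_lt h1 (hclose (σ^[n] ω) hdist A)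
    have hBnear : |∫ x, (g B (σ^[n] ω)) x * u x ∂m| < 1 / 4 := by
      have h1 := hshift (g B (σ^[n] ω)) gb
      rw [hIb, sub_zero] at h1
      exact lt_of_le_of_lt h1 (hclose (σ^[n] ω) hdist B)
    rw [hsplit]
    have h2 := abs_lt.mp hAnear
    have h3 := abs_lt.mp hBnear
    linarith [h2.1, h3.2]
  obtain ⟨n, hn1, hn2⟩ := (hlow.and_eventually hev).exists
  linarith
end

section
/- Let (P,σ) be an asymptotically periodic Markov operator cocycle whose permutation ρ_ω ≡ ρ is constant ℙ-a.e., and let k be the smallest positive integer with ρ^k = id. Then for each i ∈ {1,…,r}, the restricted cocycle (P^{(k)}|_{supp g_i}, σ^k) is exact: for ℙ-a.e. ω and every f ∈ D(supp g_i^ω, m), ‖P_ω^{(nk)}(f − g_i^ω)‖_{L^1} → 0 as n → ∞. -/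
open MeasureTheory Filter Topology

/-- coeFn of a finite sum in `Lp`. -/
lemma Lp_coeFn_sum {X ι : Type*} [MeasurableSpace X] {m : MeasureTheory.Measure X} (s : Finset ι)
    (φ : ι → Lp ℝ 1 m) :
    ⇑(∑ l ∈ s, φ l) =ᵐ[m] fun x => ∑ l ∈ s, φ l x := by
  induction s using Finset.cons_induction_on with
  | empty => simp only [Finset.sum_empty]; exact Lp.coeFn_zero (E := ℝ) (p := 1) (μ := m)
  | @cons a s hl ih =>
      have h0 : (∑ l ∈ Finset.cons a s hl, φ l) = φ a + ∑ l ∈ s, φ l := Finset.sum_cons hl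
      rw [h0]
      filter_upwards [Lp.coeFn_add (φ a) (∑ l ∈ s, φ l), ih] with x h1 h2
      simp only [h1, Pi.add_apply, h2, Finset.sum_cons]

/-- Let `(P,σ)` be asymptotically periodic with constant permutation `ρ` and let
`k` be the smallest positive integer with `ρ^k = id`. Then for each `i`, the
restricted cocycle `(P^{(k)}|_{supp g_i}, σ^k)` is exact: for a.e. `ω` and every
density `f` supported in `supp g_i^ω`, `‖P_ω^{(nk)}(f − g_i^ω)‖₁ → 0`. -/
theorem restricted_power_cocycle_exact
    {X : Type*} [MeasurableSpace X] (m : Measure X) [IsProbabilityMeasure m]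
    {Ω : Type*} [MeasurableSpace Ω] (Pr : Measure Ω) [IsProbabilityMeasure Pr]
    (σ : Ω → Ω) (hσ : MeasurePreserving σ Pr Pr)
    (P : Ω → Module.End ℝ (Lp ℝ 1 m))
    (hP : ∀ᵐ ω ∂Pr, (∀ f : Lp ℝ 1 m, 0 ≤ f → 0 ≤ P ω f) ∧
      ∀ f : Lp ℝ 1 m, ∫ x, (P ω f) x ∂m = ∫ x, f x ∂m)
    -- asymptotic periodicity data with constant permutation ρ:
    (r : ℕ) (hr : 0 < r)
    (g : Fin r → Ω → Lp ℝ 1 m) (lam : Fin r → Ω → (Lp ℝ 1 m →L[ℝ] ℝ))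
    (ρ : Equiv.Perm (Fin r))
    (hdens : ∀ᵐ ω ∂Pr, ∀ i, 0 ≤ g i ω ∧ ∫ x, (g i ω) x ∂m = 1)
    (hdisj : ∀ᵐ ω ∂Pr, ∀ i j, i ≠ j → g i ω ⊓ g j ω = 0)
    (hperm : ∀ᵐ ω ∂Pr, ∀ i, P ω (g i ω) = g (ρ i) (σ ω))
    (hconv : ∀ᵐ ω ∂Pr, ∀ f : Lp ℝ 1 m,
      Tendsto (fun n => ‖coc P σ n ω (f - ∑ i, lam i ω f • g i ω)‖)
        atTop (𝓝 0))
    -- k is the smallest positive integer with ρ^k = id: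
    (k : ℕ) (hk : 0 < k) (hρk : ρ ^ k = 1)
    (hkmin : ∀ j : ℕ, 0 < j → j < k → ρ ^ j ≠ 1) :
    ∀ i : Fin r, ∀ᵐ ω ∂Pr, ∀ f : Lp ℝ 1 m,
      0 ≤ f → ∫ x, f x ∂m = 1 →
      (∀ᵐ x ∂m, (g i ω) x = 0 → f x = 0) →
      Tendsto (fun n => ‖coc P σ (n * k) ω (f - g i ω)‖) atTop (𝓝 0) := by
  intro i
  have hH := hP.and (hdens.and (hdisj.and hperm))
  have horb : ∀ᵐ ω ∂Pr, ∀ n : ℕ,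
      ((∀ f : Lp ℝ 1 m, 0 ≤ f → 0 ≤ P (σ^[n] ω) f) ∧
        ∀ f : Lp ℝ 1 m, ∫ x, (P (σ^[n] ω) f) x ∂m = ∫ x, f x ∂m) ∧
      (∀ j, 0 ≤ g j (σ^[n] ω) ∧ ∫ x, (g j (σ^[n] ω)) x ∂m = 1) ∧
      (∀ j l, j ≠ l → g j (σ^[n] ω) ⊓ g l (σ^[n] ω) = 0) ∧
      (∀ j, P (σ^[n] ω) (g j (σ^[n] ω)) = g (ρ j) (σ (σ^[n] ω))) := by
    rw [ae_all_iff]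
    exact fun n => ((hσ.iterate n).quasiMeasurePreserving).ae hH
  filter_upwards [horb, hconv] with ω hω hconvω
  intro f hf0 hf1 hsupp
  -- unpack the orbitwise facts
  have hpos : ∀ n (φ : Lp ℝ 1 m), 0 ≤ φ → 0 ≤ P (σ^[n] ω) φ := fun n => (hω n).1.1
  have hint : ∀ n (φ : Lp ℝ 1 m), ∫ x, (P (σ^[n] ω) φ) x ∂m = ∫ x, φ x ∂m := fun n => (hω n).1.2
  have hgd : ∀ n j, 0 ≤ g j (σ^[n] ω) ∧ ∫ x, (g j (σ^[n] ω)) x ∂m = 1 := fun n => (hω n).2.1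
  have hgdisj : ∀ n j l, j ≠ l → g j (σ^[n] ω) ⊓ g l (σ^[n] ω) = 0 := fun n => (hω n).2.2.1
  have hgperm : ∀ n j, P (σ^[n] ω) (g j (σ^[n] ω)) = g (ρ j) (σ (σ^[n] ω)) := fun n => (hω n).2.2.2
  have hgd0 : ∀ j, 0 ≤ g j ω ∧ ∫ x, (g j ω) x ∂m = 1 := hgd 0
  -- basic cocycle facts
  have hQpos : ∀ n (φ : Lp ℝ 1 m), 0 ≤ φ → 0 ≤ coc P σ n ω φ := by
    intro n
    induction n with
    | zero => exact fun φ h => h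
    | succ n ih =>
        intro φ h
        have h1 : coc P σ (n + 1) ω φ = P (σ^[n] ω) (coc P σ n ω φ) := rfl
        rw [h1]
        exact hpos n _ (ih φ h)
  have hQint : ∀ n (φ : Lp ℝ 1 m), ∫ x, (coc P σ n ω φ) x ∂m = ∫ x, φ x ∂m := by
    intro n
    induction n with
    | zero => intro φ; rfl
    | succ n ih =>
        intro φ
        have h1 : coc P σ (n + 1) ω φ = P (σ^[n] ω) (coc P σ n ω φ) := rfl
        rw [h1, hint n, ih]
  have hQg : ∀ n j, coc P σ n ω (g j ω) = g ((ρ ^ n) j) (σ^[n] ω) := by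
    intro n
    induction n with
    | zero => intro j; rfl
    | succ n ih =>
        intro j
        have h1 : coc P σ (n + 1) ω (g j ω) = P (σ^[n] ω) (coc P σ n ω (g j ω)) := rfl
        rw [h1, ih j, hgperm n, Function.iterate_succ_apply', pow_succ',
          Equiv.Perm.mul_apply]
  have hQmono : ∀ n (φ ψ : Lp ℝ 1 m), φ ≤ ψ → coc P σ n ω φ ≤ coc P σ n ω ψ := by
    intro n φ ψ h
    have h0 : (0 : Lp ℝ 1 m) ≤ ψ - φ := sub_nonneg.mpr h
    have h1 := hQpos n _ h0
    rwa [map_sub, sub_nonneg] at h1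
  -- integral helpers
  have hJle : ∀ φ : Lp ℝ 1 m, |∫ x, φ x ∂m| ≤ ‖φ‖ := fun φ => by
    rw [← L1.integral_eq_integral, ← Real.norm_eq_abs]
    exact L1.norm_integral_le φ
  have hpt0 : ∀ φ : Lp ℝ 1 m, 0 ≤ φ → ∀ᵐ x ∂m, 0 ≤ φ x := by
    intro φ h
    filter_upwards [(Lp.coeFn_nonneg φ).mpr h] with x hx using hx
  have hsumae : ∀ (a : Fin r → ℝ) (ψ : Fin r → Lp ℝ 1 m),
      ∀ᵐ x ∂m, (∑ l, a l • ψ l : Lp ℝ 1 m) x = ∑ l, a l * (ψ l) x := by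
    intro a ψ
    have h4 : ∀ᵐ x ∂m, ∀ l : Fin r, (a l • ψ l) x = a l * (ψ l) x := by
      rw [ae_all_iff]
      intro l
      filter_upwards [Lp.coeFn_smul (a l) (ψ l)] with x hx using by simpa using hx
    filter_upwards [Lp_coeFn_sum Finset.univ (fun l => a l • ψ l), h4] with x h1 h2
    rw [h1]
    exact Finset.sum_congr rfl fun l _ => h2 l
  have hintsum : ∀ (a : Fin r → ℝ) (ψ : Fin r → Lp ℝ 1 m),
      ∫ x, (∑ l, a l • ψ l : Lp ℝ 1 m) x ∂m = ∑ l, a l * ∫ x, (ψ l) x ∂m := by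
    intro a ψ
    rw [integral_congr_ae (hsumae a ψ),
      integral_finset_sum _ fun l _ => ((L1.integrable_coeFn (ψ l)).const_mul (a l))]
    exact Finset.sum_congr rfl fun l _ => integral_const_mul _ _
  have hintsub : ∀ φ ψ : Lp ℝ 1 m,
      ∫ x, (φ - ψ : Lp ℝ 1 m) x ∂m = ∫ x, φ x ∂m - ∫ x, ψ x ∂m := by
    intro φ ψ
    have h : ⇑(φ - ψ) =ᵐ[m] fun x => φ x - ψ x := by
      filter_upwards [Lp.coeFn_sub φ ψ] with x hx using hx
    rw [integral_congr_ae h]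
    exact integral_sub (L1.integrable_coeFn φ) (L1.integrable_coeFn ψ)
  -- Step A: for any density φ, the coefficients sum to ∫ φ
  have hsum1 : ∀ φ : Lp ℝ 1 m, ∑ l, lam l ω φ = ∫ x, φ x ∂m := by
    intro φ
    have key : ∀ n : ℕ,
        ∫ x, (coc P σ n ω (φ - ∑ l, lam l ω φ • g l ω)) x ∂m
          = ∫ x, φ x ∂m - ∑ l, lam l ω φ := by
      intro n
      rw [hQint, hintsub, hintsum]
      congr 1
      exact Finset.sum_congr rfl fun l _ => by rw [(hgd0 l).2, mul_one]
    have h1 : ∀ n, |∫ x, φ x ∂m - ∑ l, lam l ω φ|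
        ≤ ‖coc P σ n ω (φ - ∑ l, lam l ω φ • g l ω)‖ := by
      intro n
      rw [← key n]
      exact hJle _
    have h3 : |∫ x, φ x ∂m - ∑ l, lam l ω φ| ≤ 0 := ge_of_tendsto' (hconvω φ) h1
    have h4 := le_antisymm h3 (abs_nonneg _)
    rw [abs_eq_zero, sub_eq_zero] at h4
    exact h4.symm
  -- the truncations
  have hgi0 : 0 ≤ g i ω := (hgd0 i).1
  set hc : ℕ → Lp ℝ 1 m := fun c => f ⊓ ((c : ℝ) • g i ω) with hhc
  -- pointwise description of hc
  have hcae : ∀ᵐ x ∂m, ∀ c : ℕ, (hc c) x = min (f x) ((c : ℝ) * (g i ω) x) := by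
    rw [ae_all_iff]
    intro c
    filter_upwards [Lp.coeFn_inf f ((c : ℝ) • g i ω), Lp.coeFn_smul ((c : ℝ)) (g i ω)]
      with x h2 h3
    rw [hhc]
    simp only [h2, Pi.inf_apply, h3, Pi.smul_apply, smul_eq_mul]
  -- hc c → f in L¹
  have hlim : Tendsto hc atTop (𝓝 f) := by
    rw [tendsto_iff_norm_sub_tendsto_zero]
    have heq : ∀ c : ℕ, ‖hc c - f‖ = ∫ x, ‖(hc c - f : Lp ℝ 1 m) x‖ ∂m :=
      fun c => L1.norm_eq_integral_norm _
    have hae : ∀ᵐ x ∂m, ∀ c : ℕ,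
        (hc c - f : Lp ℝ 1 m) x = min (f x) ((c : ℝ) * (g i ω) x) - f x := by
      rw [ae_all_iff]
      intro c
      have h0 : ∀ᵐ x ∂m, (hc c) x = min (f x) ((c : ℝ) * (g i ω) x) := by
        filter_upwards [hcae] with x hx using hx c
      filter_upwards [Lp.coeFn_sub (hc c) f, h0] with x h1 h2
      rw [h1, Pi.sub_apply, h2]
    have hg0ae : ∀ᵐ x ∂m, 0 ≤ (g i ω) x := hpt0 _ hgi0
    have hf0ae : ∀ᵐ x ∂m, 0 ≤ f x := hpt0 _ hf0
    have hDCT := tendsto_integral_of_dominated_convergence (μ := m)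
        (F := fun (c : ℕ) x => ‖(hc c - f : Lp ℝ 1 m) x‖) (f := fun _ => (0 : ℝ))
        (bound := fun x => f x)
        (fun c => (Lp.aestronglyMeasurable _).norm)
        (L1.integrable_coeFn f)
        (by
          intro c
          filter_upwards [hae, hg0ae, hf0ae] with x h1 h2 h3
          have hmin1 : min (f x) ((c : ℝ) * (g i ω) x) ≤ f x := min_le_left _ _
          have hmin0 : 0 ≤ min (f x) ((c : ℝ) * (g i ω) x) :=
            le_min h3 (mul_nonneg (Nat.cast_nonneg c) h2)
          rw [h1 c, norm_norm, Real.norm_eq_abs, abs_sub_comm,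
            abs_of_nonneg (by linarith)]
          linarith)
        (by
          filter_upwards [hae, hg0ae, hf0ae, hsupp] with x h1 h2 h3 h4
          rcases lt_or_eq_of_le h2 with hgpos | hg0
          · obtain ⟨N, hN⟩ := exists_nat_ge (f x / (g i ω) x)
            have hz : ∀ c : ℕ, N ≤ c → ‖(hc c - f : Lp ℝ 1 m) x‖ = 0 := by
              intro c hcN
              rw [h1 c]
              have h5 : f x ≤ (c : ℝ) * (g i ω) x := by
                have h6 : f x / (g i ω) x ≤ (c : ℝ) := hN.trans (by exact_mod_cast hcN)
                calc f x = (f x / (g i ω) x) * (g i ω) x := by field_simp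
                  _ ≤ (c : ℝ) * (g i ω) x :=
                    mul_le_mul_of_nonneg_right h6 (le_of_lt hgpos)
              rw [min_eq_left h5, sub_self, norm_zero]
            exact tendsto_const_nhds.congr'
              (eventually_atTop.mpr ⟨N, fun c hcN => (hz c hcN).symm⟩)
          · have hf0x : f x = 0 := h4 hg0.symm
            have hz : ∀ c : ℕ, ‖(hc c - f : Lp ℝ 1 m) x‖ = 0 := by
              intro c
              rw [h1 c, hf0x, ← hg0, mul_zero, min_self, sub_self, norm_zero]
            exact tendsto_const_nhds.congr fun c => (hz c).symm)
    rw [integral_zero] at hDCT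
    exact hDCT.congr fun c => (heq c).symm
  -- Step B1: the coefficients of truncated densities with index ≠ i vanish
  have hB1 : ∀ (c : ℕ) (j : Fin r), j ≠ i → lam j ω (hc c) = 0 := by
    intro c j hji
    have hsm0 : (0 : Lp ℝ 1 m) ≤ (c : ℝ) • g i ω := by
      rw [← Lp.coeFn_nonneg]
      filter_upwards [Lp.coeFn_smul ((c : ℝ)) (g i ω), hpt0 _ hgi0] with x h1 h2
      rw [h1]
      simpa using mul_nonneg (Nat.cast_nonneg c) h2
    have hhc0 : (0 : Lp ℝ 1 m) ≤ hc c := le_inf hf0 hsm0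
    have hhcle : hc c ≤ (c : ℝ) • g i ω := inf_le_right
    have habs : ∀ n : ℕ,
        |lam j ω (hc c)| ≤ ‖coc P σ n ω (hc c - ∑ l, lam l ω (hc c) • g l ω)‖ := by
      intro n
      have hdec : coc P σ n ω (hc c - ∑ l, lam l ω (hc c) • g l ω)
          = coc P σ n ω (hc c) - ∑ l, lam l ω (hc c) • g ((ρ ^ n) l) (σ^[n] ω) := by
        rw [map_sub, map_sum]
        congr 1
        exact Finset.sum_congr rfl fun l _ => by rw [_root_.map_smul, hQg n l]
      -- pointwise bound
      have e1 : ∀ᵐ x ∂m, ∀ l : Fin r, 0 ≤ (g ((ρ ^ n) l) (σ^[n] ω)) x := by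
        rw [ae_all_iff]
        exact fun l => hpt0 _ (hgd n _).1
      have e2 : ∀ᵐ x ∂m, ∀ l : Fin r, l ≠ j →
          min ((g ((ρ ^ n) l) (σ^[n] ω)) x) ((g ((ρ ^ n) j) (σ^[n] ω)) x) = 0 := by
        rw [ae_all_iff]
        intro l
        by_cases hl : l = j
        · exact Filter.Eventually.of_forall fun x h => (h hl).elim
        · have hne : (ρ ^ n) l ≠ (ρ ^ n) j := fun hEq => hl (Equiv.injective _ hEq)
          have hz := hgdisj n _ _ hne
          have hz0 : ⇑(g ((ρ ^ n) l) (σ^[n] ω) ⊓ g ((ρ ^ n) j) (σ^[n] ω)) =ᵐ[m]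
              (0 : X → ℝ) := by
            rw [hz]
            exact Lp.coeFn_zero _ _ _
          filter_upwards [hz0,
            Lp.coeFn_inf (g ((ρ ^ n) l) (σ^[n] ω)) (g ((ρ ^ n) j) (σ^[n] ω))] with x h1 h2 _
          rw [h2, Pi.inf_apply] at h1
          exact h1
      have hQ0 : (0 : Lp ℝ 1 m) ≤ coc P σ n ω (hc c) := hQpos n _ hhc0
      have hQle : coc P σ n ω (hc c) ≤ (c : ℝ) • g ((ρ ^ n) i) (σ^[n] ω) := by
        have h1 := hQmono n _ _ hhcle
        rwa [_root_.map_smul, hQg n i] at h1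
      have e3 : ∀ᵐ x ∂m, 0 ≤ (coc P σ n ω (hc c)) x := hpt0 _ hQ0
      have e4 : ∀ᵐ x ∂m, (coc P σ n ω (hc c)) x
          ≤ (c : ℝ) * (g ((ρ ^ n) i) (σ^[n] ω)) x := by
        filter_upwards [(Lp.coeFn_le _ _).mpr hQle,
          Lp.coeFn_smul ((c : ℝ)) (g ((ρ ^ n) i) (σ^[n] ω))] with x h1 h2
        have h3 := h1.trans_eq h2
        simpa using h3
      have e5 : ∀ᵐ x ∂m, (coc P σ n ω (hc c - ∑ l, lam l ω (hc c) • g l ω)) x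
          = (coc P σ n ω (hc c)) x
            - ∑ l, lam l ω (hc c) * (g ((ρ ^ n) l) (σ^[n] ω)) x := by
        filter_upwards [Lp.coeFn_sub (coc P σ n ω (hc c))
            (∑ l, lam l ω (hc c) • g ((ρ ^ n) l) (σ^[n] ω)),
          hsumae (fun l => lam l ω (hc c)) (fun l => g ((ρ ^ n) l) (σ^[n] ω))] with x h1 h2
        rw [hdec, h1, Pi.sub_apply, h2]
      have hptwise : ∀ᵐ x ∂m, |lam j ω (hc c) * (g ((ρ ^ n) j) (σ^[n] ω)) x|
          ≤ ‖(coc P σ n ω (hc c - ∑ l, lam l ω (hc c) • g l ω)) x‖ := by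
        filter_upwards [e1, e2, e3, e4, e5] with x h1 h2 h3 h4 h5
        rcases eq_or_lt_of_le (h1 j) with hj0 | hjpos
        · rw [← hj0, mul_zero, abs_zero]
          exact norm_nonneg _
        · have hall : ∀ l, l ≠ j → (g ((ρ ^ n) l) (σ^[n] ω)) x = 0 := by
            intro l hl
            by_contra hne
            have hpos' : 0 < (g ((ρ ^ n) l) (σ^[n] ω)) x :=
              lt_of_le_of_ne (h1 l) (Ne.symm hne)
            have h6 := h2 l hl
            have h7 : 0 < min ((g ((ρ ^ n) l) (σ^[n] ω)) x)
                ((g ((ρ ^ n) j) (σ^[n] ω)) x) := lt_min hpos' hjpos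
            rw [h6] at h7
            exact lt_irrefl 0 h7
          have hQx : (coc P σ n ω (hc c)) x = 0 := by
            have h8 : (g ((ρ ^ n) i) (σ^[n] ω)) x = 0 :=
              hall i fun h => hji h.symm
            rw [h8, mul_zero] at h4
            exact le_antisymm h4 h3
          have hsum : ∑ l, lam l ω (hc c) * (g ((ρ ^ n) l) (σ^[n] ω)) x
              = lam j ω (hc c) * (g ((ρ ^ n) j) (σ^[n] ω)) x :=
            Finset.sum_eq_single j
              (fun l _ hl => by rw [hall l hl, mul_zero]) (by simp)
          rw [h5, hQx, hsum, zero_sub, norm_neg, Real.norm_eq_abs]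
      have hleft : ∫ x, |lam j ω (hc c) * (g ((ρ ^ n) j) (σ^[n] ω)) x| ∂m
          = |lam j ω (hc c)| := by
        have h9 : ∀ᵐ x ∂m, |lam j ω (hc c) * (g ((ρ ^ n) j) (σ^[n] ω)) x|
            = |lam j ω (hc c)| * (g ((ρ ^ n) j) (σ^[n] ω)) x := by
          filter_upwards [hpt0 _ (hgd n ((ρ ^ n) j)).1] with x hx
          rw [abs_mul, abs_of_nonneg hx]
        rw [integral_congr_ae h9, integral_const_mul, (hgd n _).2, mul_one]
      calc |lam j ω (hc c)|
          = ∫ x, |lam j ω (hc c) * (g ((ρ ^ n) j) (σ^[n] ω)) x| ∂m := hleft.symm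
        _ ≤ ∫ x, ‖(coc P σ n ω (hc c - ∑ l, lam l ω (hc c) • g l ω)) x‖ ∂m :=
            integral_mono_ae
              (((L1.integrable_coeFn _).const_mul (lam j ω (hc c))).abs)
              ((L1.integrable_coeFn _).norm) hptwise
        _ = ‖coc P σ n ω (hc c - ∑ l, lam l ω (hc c) • g l ω)‖ :=
            (L1.norm_eq_integral_norm _).symm
    have h3 : |lam j ω (hc c)| ≤ 0 := ge_of_tendsto' (hconvω (hc c)) habs
    exact abs_eq_zero.mp (le_antisymm h3 (abs_nonneg _))
  -- Step B2: the coefficients of f vanish off i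
  have hB2 : ∀ j, j ≠ i → lam j ω f = 0 := by
    intro j hji
    have hcont : Tendsto (fun c => lam j ω (hc c)) atTop (𝓝 (lam j ω f)) :=
      ((lam j ω).continuous.tendsto f).comp hlim
    have heq : (fun c : ℕ => lam j ω (hc c)) = fun _ => (0 : ℝ) :=
      funext fun c => hB1 c j hji
    rw [heq] at hcont
    exact tendsto_nhds_unique hcont tendsto_const_nhds
  -- Step C: the spectral sum for f is g i ω
  have hsumf : ∑ l, lam l ω f = 1 := by rw [hsum1 f, hf1]
  have hlfi : lam i ω f = 1 := by
    rw [Finset.sum_eq_single i (fun l _ hl => hB2 l hl) (by simp)] at hsumf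
    exact hsumf
  have hgsum : (∑ l, lam l ω f • g l ω) = g i ω := by
    rw [Finset.sum_eq_single i (fun l _ hl => by rw [hB2 l hl, zero_smul]) (by simp),
      hlfi, one_smul]
  -- conclusion
  have hmain := hconvω f
  rw [hgsum] at hmain
  exact hmain.comp (tendsto_atTop_atTop.mpr fun b =>
    ⟨b, fun a ha => ha.trans (Nat.le_mul_of_pos_right a hk)⟩)
end
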